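/- Marginalization of a Gaussian PSD model: let A ∈ ℝⁿˣⁿ be positive semidefinite, let (xᵢ,yᵢ) ∈ ℝᵈ × ℝᵈ' for i=1,…,n, and let η ∈ ℝᵈ, η' ∈ ℝᵈ' be positive. Then ∫_{ℝᵈ} Σᵢⱼ Aᵢⱼ k_η(xᵢ,x)k_η(xⱼ,x)k_{η'}(yᵢ,y)k_{η'}(yⱼ,y) dx = Σᵢⱼ Bᵢⱼ k_{η'}(yᵢ,y)k_{η'}(yⱼ,y), where Bᵢⱼ = c_{2η} · Aᵢⱼ · k_{η/2}(xᵢ,xⱼ) and c_{2η} = π^{d/2} ∏ₜ(2ηₜ)^{-1/2}. Moreover the matrix B is positive semidefinite. -/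

import Mathlib

open MeasureTheory

/-- The anisotropic Gaussian kernel with precision vector `η`. -/
noncomputable def gaussK {d : ℕ} (η x y : Fin d → ℝ) : ℝ :=
  Real.exp (-∑ t, η t * (x t - y t) ^ 2)

lemma exponent_split (η a b x : ℝ) :
    -(η * (a - x) ^ 2 + η * (b - x) ^ 2) =
      -(2 * η) * (x - (a + b) / 2) ^ 2 + -(η / 2 * (a - b) ^ 2) := by ring

lemma oneD_integrable {η : ℝ} (hη : 0 < η) (a b : ℝ) :
    Integrable (fun x : ℝ => Real.exp (-(η * (a - x) ^ 2 + η * (b - x) ^ 2))) := by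
  have h2η : (0 : ℝ) < 2 * η := by linarith
  have hbase : Integrable (fun x : ℝ => Real.exp (-(2 * η) * x ^ 2)) :=
    integrable_exp_neg_mul_sq h2η
  have hshift := hbase.comp_sub_right ((a + b) / 2)
  have := (hshift.mul_const (Real.exp (-(η / 2 * (a - b) ^ 2))))
  refine this.congr ?_
  filter_upwards with x
  rw [← Real.exp_add, ← exponent_split]

lemma oneD_integral {η : ℝ} (hη : 0 < η) (a b : ℝ) :
    ∫ x : ℝ, Real.exp (-(η * (a - x) ^ 2 + η * (b - x) ^ 2)) =
      Real.sqrt (Real.pi / (2 * η)) * Real.exp (-(η / 2 * (a - b) ^ 2)) := by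
  have h1 : ∀ x : ℝ, Real.exp (-(η * (a - x) ^ 2 + η * (b - x) ^ 2)) =
      Real.exp (-(2 * η) * (x - (a + b) / 2) ^ 2) * Real.exp (-(η / 2 * (a - b) ^ 2)) := by
    intro x; rw [← Real.exp_add, ← exponent_split]
  simp_rw [h1]
  rw [integral_mul_const]
  congr 1
  rw [integral_sub_right_eq_self (fun x : ℝ => Real.exp (-(2 * η) * x ^ 2)) ((a + b) / 2)]
  exact integral_gaussian (2 * η)

lemma prod_repr {d : ℕ} (η : Fin d → ℝ) (a b : Fin d → ℝ) (x : Fin d → ℝ) :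
    gaussK η a x * gaussK η b x =
      ∏ t, Real.exp (-(η t * (a t - x t) ^ 2 + η t * (b t - x t) ^ 2)) := by
  unfold gaussK
  rw [← Real.exp_add, ← Real.exp_sum]
  congr 1
  simp only [neg_add, Finset.sum_add_distrib, Finset.sum_neg_distrib]

lemma gauss_prod_integrable {d : ℕ} {η : Fin d → ℝ} (hη : ∀ t, 0 < η t)
    (a b : Fin d → ℝ) :
    Integrable (fun x : Fin d → ℝ => gaussK η a x * gaussK η b x) := by
  have h := Integrable.fintype_prod
    (f := fun t (u : ℝ) => Real.exp (-(η t * (a t - u) ^ 2 + η t * (b t - u) ^ 2)))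
    (fun t => oneD_integrable (hη t) (a t) (b t))
  refine h.congr ?_
  filter_upwards with x
  exact (prod_repr η a b x).symm

lemma gauss_prod_integral {d : ℕ} {η : Fin d → ℝ} (hη : ∀ t, 0 < η t)
    (a b : Fin d → ℝ) :
    ∫ x : Fin d → ℝ, gaussK η a x * gaussK η b x =
      (Real.pi ^ ((d : ℝ) / 2) * ∏ t, (2 * η t) ^ (-(1 : ℝ) / 2)) *
        gaussK (fun t => η t / 2) a b := by
  simp_rw [prod_repr η a b]
  rw [volume_pi, integral_fintype_prod_eq_prod (μ := fun _ => volume)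
    (f := fun t (u : ℝ) => Real.exp (-(η t * (a t - u) ^ 2 + η t * (b t - u) ^ 2)))]
  have h1 : ∀ t, ∫ u : ℝ, Real.exp (-(η t * (a t - u) ^ 2 + η t * (b t - u) ^ 2)) =
      Real.sqrt (Real.pi / (2 * η t)) * Real.exp (-(η t / 2 * (a t - b t) ^ 2)) :=
    fun t => oneD_integral (hη t) (a t) (b t)
  simp_rw [h1]
  rw [Finset.prod_mul_distrib]
  congr 1
  · have h2 : ∀ t : Fin d, Real.sqrt (Real.pi / (2 * η t)) =
        Real.pi ^ ((1 : ℝ) / 2) * (2 * η t) ^ (-(1 : ℝ) / 2) := by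
      intro t
      have h2η : (0 : ℝ) < 2 * η t := by linarith [hη t]
      have h1half : (-(1:ℝ)/2) = -((1:ℝ)/2) := by norm_num
      rw [Real.sqrt_div Real.pi_pos.le, Real.sqrt_eq_rpow, Real.sqrt_eq_rpow,
        div_eq_mul_inv, h1half, Real.rpow_neg h2η.le]
    simp_rw [h2]
    rw [Finset.prod_mul_distrib, Finset.prod_const, Finset.card_univ, Fintype.card_fin]
    congr 1
    rw [← Real.rpow_natCast (Real.pi ^ ((1:ℝ)/2)) d, ← Real.rpow_mul Real.pi_pos.le]
    congr 1
    ring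
  · rw [← Real.exp_sum]
    unfold gaussK
    congr 1
    rw [← Finset.sum_neg_distrib]

lemma gaussK_symm {d : ℕ} (η a b : Fin d → ℝ) : gaussK η a b = gaussK η b a := by
  unfold gaussK
  congr 1
  congr 1
  exact Finset.sum_congr rfl fun t _ => by ring

theorem psd_model_marginalization (d d' n : ℕ) (A : Matrix (Fin n) (Fin n) ℝ)
    (hA : A.PosSemidef) (X : Fin n → Fin d → ℝ) (Y : Fin n → Fin d' → ℝ)
    (η : Fin d → ℝ) (η' : Fin d' → ℝ) (hη : ∀ t, 0 < η t) (hη' : ∀ t, 0 < η' t) :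
    (∀ y : Fin d' → ℝ,
      ∫ x : Fin d → ℝ, ∑ i, ∑ j, A i j * gaussK η (X i) x * gaussK η (X j) x *
          gaussK η' (Y i) y * gaussK η' (Y j) y =
        ∑ i, ∑ j,
          ((Real.pi ^ ((d : ℝ) / 2) * ∏ t, (2 * η t) ^ (-(1 : ℝ) / 2)) * A i j *
              gaussK (fun t => η t / 2) (X i) (X j)) *
            gaussK η' (Y i) y * gaussK η' (Y j) y) ∧
    (Matrix.of fun i j =>
        (Real.pi ^ ((d : ℝ) / 2) * ∏ t, (2 * η t) ^ (-(1 : ℝ) / 2)) * A i j *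
          gaussK (fun t => η t / 2) (X i) (X j)).PosSemidef := by
  set C : ℝ := Real.pi ^ ((d : ℝ) / 2) * ∏ t, (2 * η t) ^ (-(1 : ℝ) / 2) with hC
  constructor
  · intro y
    have hInt : ∀ i j : Fin n, Integrable (fun x : Fin d → ℝ =>
        A i j * gaussK η (X i) x * gaussK η (X j) x * gaussK η' (Y i) y *
          gaussK η' (Y j) y) := by
      intro i j
      have h := (gauss_prod_integrable hη (X i) (X j)).const_mul
        (A i j * gaussK η' (Y i) y * gaussK η' (Y j) y)
      refine h.congr ?_
      filter_upwards with x
      ring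
    rw [integral_finset_sum _ fun i _ => integrable_finset_sum _ fun j _ => hInt i j]
    refine Finset.sum_congr rfl fun i _ => ?_
    rw [integral_finset_sum _ fun j _ => hInt i j]
    refine Finset.sum_congr rfl fun j _ => ?_
    have hfun : (fun x : Fin d → ℝ =>
        A i j * gaussK η (X i) x * gaussK η (X j) x * gaussK η' (Y i) y *
          gaussK η' (Y j) y) = fun x =>
        (A i j * gaussK η' (Y i) y * gaussK η' (Y j) y) *
          (gaussK η (X i) x * gaussK η (X j) x) := by
      funext x; ring
    rw [hfun, integral_const_mul, gauss_prod_integral hη]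
    ring
  · have hAsymm : ∀ i j, A j i = A i j := by
      intro i j
      have h := congrFun (congrFun hA.1 i) j
      simpa using h
    rw [Matrix.posSemidef_iff_dotProduct_mulVec]
    constructor
    · ext i j
      simp only [Matrix.conjTranspose_apply, Matrix.of_apply, star_trivial]
      rw [hAsymm i j, gaussK_symm]
    · intro v
      have hI2 : ∀ i j : Fin n, Integrable (fun x : Fin d → ℝ =>
          (v i * A i j * v j) * (gaussK η (X i) x * gaussK η (X j) x)) :=
        fun i j => (gauss_prod_integrable hη (X i) (X j)).const_mul _
      have key : dotProduct (star v) (Matrix.mulVec (Matrix.of fun i j =>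
          C * A i j * gaussK (fun t => η t / 2) (X i) (X j)) v) =
          ∫ x : Fin d → ℝ, ∑ i, ∑ j,
            (v i * A i j * v j) * (gaussK η (X i) x * gaussK η (X j) x) := by
        rw [integral_finset_sum _ fun i _ => integrable_finset_sum _ fun j _ => hI2 i j]
        simp only [dotProduct, Matrix.mulVec, Matrix.of_apply, star_trivial,
          Finset.mul_sum]
        refine Finset.sum_congr rfl fun i _ => ?_
        rw [integral_finset_sum _ fun j _ => hI2 i j]
        refine Finset.sum_congr rfl fun j _ => ?_
        rw [integral_const_mul, gauss_prod_integral hη]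
        ring
      rw [key]
      refine integral_nonneg fun x => ?_
      have h := hA.dotProduct_mulVec_nonneg (fun i => v i * gaussK η (X i) x)
      have h2 : dotProduct (star fun i => v i * gaussK η (X i) x)
          (Matrix.mulVec A fun i => v i * gaussK η (X i) x) =
          ∑ i, ∑ j, (v i * A i j * v j) * (gaussK η (X i) x * gaussK η (X j) x) := by
        simp only [dotProduct, Matrix.mulVec, star_trivial, Pi.star_apply,
          Finset.mul_sum]
        exact Finset.sum_congr rfl fun i _ => Finset.sum_congr rfl fun j _ => by ring
      rw [← h2]
      exact h
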